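/- Let g = (g₁, g₂) : [-1,1] → ℝ² be continuous with g₁ strictly increasing on [-1,1]. Assume: (i) there exists t₀ ∈ (-1,1) with g(t₀) ∈ (-1,1) × (-1,1); (ii) g(t) ∉ [-1,1] × (ℝ ∖ (-1,1)) for every t ∈ [-1,1]; (iii) g₁(-1) < -1 and g₁(1) > 1. Then there exist t_*, t* with -1 < t_* < t₀ < t* < 1 such that g(t) ∈ (-∞,-1) × ℝ for all t ∈ [-1, t_*), g(t) ∈ (1,∞) × ℝ for all t ∈ (t*, 1], and g(t) ∈ (-1,1) × (-1,1) for all t ∈ (t_*, t*). -/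
import Mathlib


/-- Crossing structure (Lemma odwrotne, coordinate form): a continuous curve with strictly
increasing first coordinate which avoids the half-strips above and below the unit square,
passes through the open square, and starts strictly to the left / ends strictly to the right
of the square, crosses the square exactly once. -/
theorem curve_crosses_square_once
    (g : ℝ → ℝ × ℝ) (hg : ContinuousOn g (Set.Icc (-1 : ℝ) 1))
    (hmono : StrictMonoOn (fun t => (g t).1) (Set.Icc (-1 : ℝ) 1))
    (t₀ : ℝ) (ht₀ : t₀ ∈ Set.Ioo (-1 : ℝ) 1)
    (hin : g t₀ ∈ Set.Ioo (-1 : ℝ) 1 ×ˢ Set.Ioo (-1 : ℝ) 1)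
    (havoid : ∀ t ∈ Set.Icc (-1 : ℝ) 1,
      g t ∉ Set.Icc (-1 : ℝ) 1 ×ˢ (Set.Ioo (-1 : ℝ) 1)ᶜ)
    (hleft : (g (-1)).1 < -1) (hright : 1 < (g 1).1) :
    ∃ tstar tStar : ℝ, -1 < tstar ∧ tstar < t₀ ∧ t₀ < tStar ∧ tStar < 1 ∧
      (∀ t ∈ Set.Ico (-1 : ℝ) tstar, (g t).1 < -1) ∧
      (∀ t ∈ Set.Ioc tStar (1 : ℝ), 1 < (g t).1) ∧
      (∀ t ∈ Set.Ioo tstar tStar,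
        g t ∈ Set.Ioo (-1 : ℝ) 1 ×ˢ Set.Ioo (-1 : ℝ) 1) := by
  set f : ℝ → ℝ := fun t => (g t).1 with hf
  have hfc : ContinuousOn f (Set.Icc (-1 : ℝ) 1) := continuous_fst.comp_continuousOn hg
  obtain ⟨ht₀l, ht₀r⟩ := ht₀
  have ht₀mem : t₀ ∈ Set.Icc (-1 : ℝ) 1 := ⟨ht₀l.le, ht₀r.le⟩
  obtain ⟨⟨hx1, hx2⟩, _⟩ := hin
  -- find tstar with f tstar = -1 on [-1, t₀]
  have h1 : Set.Icc (-1 : ℝ) t₀ ⊆ Set.Icc (-1 : ℝ) 1 :=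
    Set.Icc_subset_Icc le_rfl ht₀r.le
  have h2 : Set.Icc t₀ (1 : ℝ) ⊆ Set.Icc (-1 : ℝ) 1 :=
    Set.Icc_subset_Icc ht₀l.le le_rfl
  obtain ⟨ts, hts, htseq⟩ : ∃ ts ∈ Set.Icc (-1 : ℝ) t₀, f ts = -1 := by
    have := intermediate_value_Icc ht₀l.le (hfc.mono h1)
    exact this ⟨hleft.le, hx1.le⟩
  obtain ⟨tS, htS, htSeq⟩ : ∃ tS ∈ Set.Icc t₀ (1 : ℝ), f tS = 1 := by
    have := intermediate_value_Icc ht₀r.le (hfc.mono h2)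
    exact this ⟨hx2.le, hright.le⟩
  have htsmem : ts ∈ Set.Icc (-1 : ℝ) 1 := h1 hts
  have htSmem : tS ∈ Set.Icc (-1 : ℝ) 1 := h2 htS
  have hts_gt : -1 < ts := by
    rcases lt_or_eq_of_le hts.1 with h | h
    · exact h
    · exfalso; rw [← h] at htseq; exact absurd htseq (by linarith)
  have hts_lt : ts < t₀ := by
    rcases lt_or_eq_of_le hts.2 with h | h
    · exact h
    · exfalso; rw [h] at htseq; linarith
  have htS_gt : t₀ < tS := by
    rcases lt_or_eq_of_le htS.1 with h | h
    · exact h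
    · exfalso; rw [← h] at htSeq; linarith
  have htS_lt : tS < 1 := by
    rcases lt_or_eq_of_le htS.2 with h | h
    · exact h
    · exfalso; rw [h] at htSeq; linarith
  refine ⟨ts, tS, hts_gt, hts_lt, htS_gt, htS_lt, ?_, ?_, ?_⟩
  · intro t ⟨ht1, ht2⟩
    have : f t < f ts := hmono ⟨ht1, by linarith⟩ htsmem ht2
    linarith [htseq ▸ this]
  · intro t ⟨ht1, ht2⟩
    have : f tS < f t := hmono htSmem ⟨by linarith, ht2⟩ ht1
    linarith [htSeq ▸ this]
  · intro t ⟨ht1, ht2⟩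
    have htmem : t ∈ Set.Icc (-1 : ℝ) 1 := ⟨by linarith, by linarith⟩
    have hlo : -1 < f t := htseq ▸ hmono htsmem htmem ht1
    have hhi : f t < 1 := htSeq ▸ hmono htmem htSmem ht2
    have h2 : (g t).2 ∈ Set.Ioo (-1 : ℝ) 1 := by
      by_contra hc
      exact havoid t htmem ⟨⟨hlo.le, hhi.le⟩, hc⟩
    exact ⟨⟨hlo, hhi⟩, h2⟩
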